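/- Let N, K be natural numbers with 2 ≤ K ≤ N. Then there exists a testing design feasible for (N, K) with at most ⌊log(K · C(N, K)) / log(K/(K−1))⌋ + 1 tests, where C(N, K) is the binomial coefficient and log denotes the natural logarithm; in particular T(N, K) ≤ ⌈K · log(K · C(N, K))⌉. -/

import Mathlib

/-- The outcome of a cascaded test `t` (a list of items) on a defective set `S`:
the first element of `t` belonging to `S`, or `none` if there is none. -/
def outcome {N : ℕ} (t : List (Fin N)) (S : Finset (Fin N)) : Option (Fin N) :=
  (t.filter (fun x => x ∈ S)).head?

/-- A testing design `𝒯` (an indexed family of tests) is feasible for `(N, K)` if the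
map sending each `S ⊆ Fin N` with `|S| ≤ K` to its vector of test outcomes is injective
on `{S | |S| ≤ K}`. -/
def Feasible (N K : ℕ) {T : ℕ} (𝒯 : Fin T → List (Fin N)) : Prop :=
  Set.InjOn (fun (S : Finset (Fin N)) => fun i : Fin T => outcome (𝒯 i) S)
    {S : Finset (Fin N) | S.card ≤ K}

/-- `TNK N K`: the minimum number of tests over all duplicate-free testing designs
feasible for `(N, K)`. -/
noncomputable def TNK (N K : ℕ) : ℕ :=
  sInf {T : ℕ | ∃ 𝒯 : Fin T → List (Fin N), (∀ i, (𝒯 i).Nodup) ∧ Feasible N K 𝒯}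

/-- `fT 𝒯 S v`: the number of tests in the design `𝒯` whose outcome on `S` is `some v`. -/
def fT {N T : ℕ} (𝒯 : Fin T → List (Fin N)) (S : Finset (Fin N)) (v : Fin N) : ℕ :=
  (Finset.univ.filter (fun i : Fin T => outcome (𝒯 i) S = some v)).card

/-- A design is in systematic form if every test is nonempty and the first element of
each test does not occur in any other test. -/
def Systematic {N T : ℕ} (𝒯 : Fin T → List (Fin N)) : Prop :=
  ∀ i : Fin T, 𝒯 i ≠ [] ∧ ∀ u : Fin N, (𝒯 i).head? = some u → ∀ j : Fin T, j ≠ i → u ∉ 𝒯 j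

namespace Stmt9Aux
variable {N : ℕ}

lemma outcome_cons {x : Fin N} {t : List (Fin N)} {S : Finset (Fin N)} :
    outcome (x :: t) S = if x ∈ S then some x else outcome t S := by
  unfold outcome
  by_cases h : x ∈ S <;> simp [List.filter_cons, h]

lemma mem_of_outcome {t : List (Fin N)} {S : Finset (Fin N)} {v : Fin N}
    (h : outcome t S = some v) : v ∈ S := by
  induction t with
  | nil => simp [outcome] at h
  | cons x xs ih =>
      rw [outcome_cons] at h
      by_cases hx : x ∈ S
      · simp [hx] at h; subst h; exact hx
      · simp [hx] at h; exact ih h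

lemma outcome_subset {t : List (Fin N)} {S₁ S : Finset (Fin N)} (hsub : S₁ ⊆ S)
    {v : Fin N} (hv : v ∈ S₁) (h : outcome t S = some v) : outcome t S₁ = some v := by
  induction t with
  | nil => simp [outcome] at h
  | cons x xs ih =>
      rw [outcome_cons] at h ⊢
      by_cases hx : x ∈ S
      · simp [hx] at h
        subst h
        simp [hv]
      · have hx1 : x ∉ S₁ := fun hh => hx (hsub hh)
        simp [hx] at h
        simp [hx1]
        exact ih h

def tst (σ : Equiv.Perm (Fin N)) : List (Fin N) := (List.finRange N).map σ

lemma tst_nodup (σ : Equiv.Perm (Fin N)) : (tst σ).Nodup :=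
  (List.nodup_finRange N).map σ.injective

lemma outcome_tst_isSome {S : Finset (Fin N)} (hS : S.Nonempty) (σ : Equiv.Perm (Fin N)) :
    ∃ v ∈ S, outcome (tst σ) S = some v := by
  obtain ⟨w, hw⟩ := hS
  have hw' : w ∈ tst σ := by
    simp only [tst, List.mem_map]
    exact ⟨σ.symm w, List.mem_finRange _, σ.apply_symm_apply w⟩
  have hne : (tst σ).filter (fun x => x ∈ S) ≠ [] := by
    intro hnil
    have hmem : w ∈ (tst σ).filter (fun x => x ∈ S) :=
      List.mem_filter.2 ⟨hw', by simpa using hw⟩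
    rw [hnil] at hmem; simp at hmem
  have hne' : outcome (tst σ) S ≠ none := by
    simpa [outcome, List.head?_eq_none_iff] using hne
  obtain ⟨u, hu⟩ := Option.ne_none_iff_exists'.1 hne'
  exact ⟨u, mem_of_outcome hu, hu⟩

lemma outcome_tst_swap {S : Finset (Fin N)} {v v' : Fin N} (hv : v ∈ S) (hv' : v' ∈ S)
    (σ : Equiv.Perm (Fin N)) :
    outcome (tst (Equiv.swap v v' * σ)) S = Option.map (Equiv.swap v v') (outcome (tst σ) S) := by
  have hpres : ∀ x : Fin N, (Equiv.swap v v' x ∈ S) = (x ∈ S) := by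
    intro x
    by_cases h1 : x = v
    · subst h1; simp [Equiv.swap_apply_left, hv, hv']
    by_cases h2 : x = v'
    · subst h2; simp [Equiv.swap_apply_right, hv, hv']
    · rw [Equiv.swap_apply_of_ne_of_ne h1 h2]
  have hmap : tst (Equiv.swap v v' * σ) = (tst σ).map (Equiv.swap v v') := by
    simp only [tst, List.map_map]
    rfl
  rw [hmap]
  unfold outcome
  rw [List.filter_map, ← List.head?_map]
  congr 1
  congr 1
  apply List.filter_congr
  intro x _
  simp [Function.comp, hpres x]


noncomputable def cnt (S : Finset (Fin N)) (v : Fin N) : ℕ :=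
  (Finset.univ.filter (fun σ : Equiv.Perm (Fin N) => outcome (tst σ) S = some v)).card

lemma cnt_const {S : Finset (Fin N)} {v v' : Fin N} (hv : v ∈ S) (hv' : v' ∈ S) :
    cnt S v = cnt S v' := by
  classical
  unfold cnt
  apply Finset.card_bij' (fun σ _ => Equiv.swap v v' * σ) (fun σ _ => Equiv.swap v v' * σ)
  · intro σ hσ
    simp only [Finset.mem_filter, Finset.mem_univ, true_and] at hσ ⊢
    rw [outcome_tst_swap hv hv', hσ]
    simp [Equiv.swap_apply_left]
  · intro σ hσ
    simp only [Finset.mem_filter, Finset.mem_univ, true_and] at hσ ⊢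
    rw [outcome_tst_swap hv hv', hσ]
    simp [Equiv.swap_apply_right]
  · intro σ _; rw [← mul_assoc]; simp
  · intro σ _; rw [← mul_assoc]; simp

lemma sum_cnt {S : Finset (Fin N)} (hS : S.Nonempty) :
    ∑ v ∈ S, cnt S v = Fintype.card (Equiv.Perm (Fin N)) := by
  classical
  rw [← Finset.card_univ]
  rw [Finset.card_eq_sum_card_fiberwise
    (f := fun σ : Equiv.Perm (Fin N) => ((outcome (tst σ) S).getD hS.choose))
    (t := S) ?_]
  · apply Finset.sum_congr rfl
    intro v hv
    unfold cnt
    congr 1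
    apply Finset.filter_congr
    intro σ _
    obtain ⟨u, hu, huo⟩ := outcome_tst_isSome hS σ
    rw [huo]
    simp only [Option.getD_some]
    constructor
    · intro h; injection h
    · intro h; rw [h]
  · intro σ _
    obtain ⟨u, hu, huo⟩ := outcome_tst_isSome hS σ
    simpa [huo] using hu

lemma cnt_mul {S : Finset (Fin N)} {v : Fin N} (hv : v ∈ S) :
    S.card * cnt S v = Fintype.card (Equiv.Perm (Fin N)) := by
  rw [← sum_cnt ⟨v, hv⟩]
  rw [Finset.sum_congr rfl (fun v' hv' => cnt_const hv' hv)]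
  simp [mul_comm]

abbrev Pr (N : ℕ) := (_ : Finset (Fin N)) × Fin N

lemma exists_perm_step {K : ℕ} (hK : 1 ≤ K) (Q : Finset (Pr N))
    (hQ : ∀ q ∈ Q, q.1.card = K ∧ q.2 ∈ q.1) :
    ∃ σ : Equiv.Perm (Fin N),
      K * (Q.filter (fun q => outcome (tst σ) q.1 ≠ some q.2)).card ≤ (K - 1) * Q.card := by
  classical
  set F := Fintype.card (Equiv.Perm (Fin N)) with hF
  have hFpos : 0 < F := Fintype.card_pos
  have key : K * ∑ σ : Equiv.Perm (Fin N),
      (Q.filter (fun q => outcome (tst σ) q.1 = some q.2)).card = Q.card * F := by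
    have : ∀ σ : Equiv.Perm (Fin N),
        (Q.filter (fun q => outcome (tst σ) q.1 = some q.2)).card
        = ∑ q ∈ Q, if outcome (tst σ) q.1 = some q.2 then 1 else 0 := by
      intro σ; rw [Finset.card_filter]
    rw [Finset.sum_congr rfl (fun σ _ => this σ), Finset.sum_comm, Finset.mul_sum]
    have : ∀ q ∈ Q, K * ∑ σ : Equiv.Perm (Fin N),
        (if outcome (tst σ) q.1 = some q.2 then 1 else 0) = F := by
      intro q hq
      have : ∑ σ : Equiv.Perm (Fin N),
          (if outcome (tst σ) q.1 = some q.2 then 1 else 0) = cnt q.1 q.2 := by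
        unfold cnt; rw [Finset.card_filter]
      rw [this, ← (hQ q hq).1]
      exact cnt_mul (hQ q hq).2
    rw [Finset.sum_congr rfl this, Finset.sum_const, smul_eq_mul]
  -- exists σ with Q.card ≤ K * sat σ
  by_contra hcon
  push_neg at hcon
  obtain ⟨σ, hσ⟩ : ∃ σ : Equiv.Perm (Fin N),
      Q.card ≤ K * (Q.filter (fun q => outcome (tst σ) q.1 = some q.2)).card := by
    by_contra hall
    push_neg at hall
    have hsum : Q.card * F = ∑ σ : Equiv.Perm (Fin N),
        K * (Q.filter (fun q => outcome (tst σ) q.1 = some q.2)).card := by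
      rw [← key, Finset.mul_sum]
    have hlt : ∑ σ : Equiv.Perm (Fin N),
        K * (Q.filter (fun q => outcome (tst σ) q.1 = some q.2)).card
        < ∑ _σ : Equiv.Perm (Fin N), Q.card := by
      apply Finset.sum_lt_sum_of_nonempty
      · exact Finset.univ_nonempty
      · intro σ _; exact hall σ
    rw [Finset.sum_const, Finset.card_univ, ← hF, smul_eq_mul, mul_comm] at hlt
    omega
  apply absurd (hcon σ)
  push_neg
  have hsplit : (Q.filter (fun q => outcome (tst σ) q.1 = some q.2)).card
      + (Q.filter (fun q => outcome (tst σ) q.1 ≠ some q.2)).card = Q.card :=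
    Finset.card_filter_add_card_filter_not _
  set a := (Q.filter (fun q => outcome (tst σ) q.1 = some q.2)).card
  set b := (Q.filter (fun q => outcome (tst σ) q.1 ≠ some q.2)).card
  have h1 : K * a + K * b = K * Q.card := by rw [← Nat.mul_add, hsplit]
  have h2 : (K - 1) * Q.card = K * Q.card - Q.card := by
    cases K with
    | zero => omega
    | succ k => simp [Nat.succ_sub_one, Nat.succ_mul]
  omega

lemma exists_list_cover {K : ℕ} (hK : 1 ≤ K) :
    ∀ (T : ℕ) (Q : Finset (Pr N)) (_ : ∀ q ∈ Q, q.1.card = K ∧ q.2 ∈ q.1),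
    ∃ L : List (Equiv.Perm (Fin N)), L.length = T ∧
      K ^ T * (Q.filter (fun q => ∀ σ ∈ L, outcome (tst σ) q.1 ≠ some q.2)).card
        ≤ (K - 1) ^ T * Q.card := by
  intro T
  induction T with
  | zero =>
      intro Q hQ
      exact ⟨[], rfl, by simp⟩
  | succ T ih =>
      intro Q hQ
      obtain ⟨σ, hσ⟩ := exists_perm_step hK Q hQ
      set Q₁ := Q.filter (fun q => outcome (tst σ) q.1 ≠ some q.2) with hQ₁
      obtain ⟨L, hL, hle⟩ := ih Q₁ (fun q hq => hQ q (Finset.mem_filter.1 hq).1)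
      refine ⟨σ :: L, by simp [hL], ?_⟩
      have hfe : Q.filter (fun q => ∀ τ ∈ σ :: L, outcome (tst τ) q.1 ≠ some q.2)
          = Q₁.filter (fun q => ∀ τ ∈ L, outcome (tst τ) q.1 ≠ some q.2) := by
        rw [hQ₁, Finset.filter_filter]
        apply Finset.filter_congr
        intro q _
        simp only [List.mem_cons]
        constructor
        · intro h; exact ⟨h σ (Or.inl rfl), fun τ hτ => h τ (Or.inr hτ)⟩
        · rintro ⟨h1, h2⟩ τ (rfl | hτ)
          · exact h1
          · exact h2 τ hτ
      rw [hfe]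
      calc K ^ (T + 1) * (Q₁.filter (fun q => ∀ τ ∈ L, outcome (tst τ) q.1 ≠ some q.2)).card
          = K * (K ^ T * (Q₁.filter (fun q => ∀ τ ∈ L, outcome (tst τ) q.1 ≠ some q.2)).card) := by
            ring
        _ ≤ K * ((K - 1) ^ T * Q₁.card) := Nat.mul_le_mul_left _ hle
        _ = (K - 1) ^ T * (K * Q₁.card) := by ring
        _ ≤ (K - 1) ^ T * ((K - 1) * Q.card) := Nat.mul_le_mul_left _ hσ
        _ = (K - 1) ^ (T + 1) * Q.card := by ring


/-- Main construction: any `T` with `(K-1)^T * (K * choose) < K^T` admits a feasible design. -/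
lemma exists_design {K T : ℕ} (hK : 2 ≤ K) (hKN : K ≤ N)
    (hT : (K - 1) ^ T * (K * N.choose K) < K ^ T) :
    ∃ 𝒯 : Fin T → List (Fin N), (∀ i, (𝒯 i).Nodup) ∧ Feasible N K 𝒯 := by
  classical
  set Q : Finset (Pr N) := (Finset.univ.powersetCard K).sigma (fun S => S) with hQdef
  have hQprop : ∀ q ∈ Q, q.1.card = K ∧ q.2 ∈ q.1 := by
    intro q hq
    rw [hQdef, Finset.mem_sigma] at hq
    exact ⟨(Finset.mem_powersetCard_univ.1 hq.1), hq.2⟩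
  have hQcard : Q.card = N.choose K * K := by
    rw [hQdef, Finset.card_sigma]
    have : ∀ S ∈ (Finset.univ : Finset (Fin N)).powersetCard K, S.card = K := by
      intro S hS; exact (Finset.mem_powersetCard.1 hS).2
    rw [Finset.sum_congr rfl this, Finset.sum_const, smul_eq_mul]
    simp [Finset.card_powersetCard]
  obtain ⟨L, hL, hle⟩ := exists_list_cover (by omega) T Q hQprop
  have hrem : (Q.filter (fun q => ∀ σ ∈ L, outcome (tst σ) q.1 ≠ some q.2)).card = 0 := by
    by_contra h
    have h1 : 1 ≤ (Q.filter (fun q => ∀ σ ∈ L, outcome (tst σ) q.1 ≠ some q.2)).card := by omega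
    have : K ^ T ≤ (K - 1) ^ T * Q.card := le_trans (Nat.le_mul_of_pos_right _ (by omega)) hle
    rw [hQcard, mul_comm (N.choose K) K] at this
    omega
  have hcover : ∀ q ∈ Q, ∃ σ ∈ L, outcome (tst σ) q.1 = some q.2 := by
    intro q hq
    by_contra h
    push_neg at h
    have : q ∈ Q.filter (fun q => ∀ σ ∈ L, outcome (tst σ) q.1 ≠ some q.2) :=
      Finset.mem_filter.2 ⟨hq, h⟩
    rw [Finset.card_eq_zero] at hrem
    rw [hrem] at this
    simp at this
  refine ⟨fun i => tst (L.get (Fin.cast hL.symm i)), fun i => tst_nodup _, ?_⟩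
  -- the key covering property for arbitrary S with card ≤ K
  have hkey : ∀ S : Finset (Fin N), S.card ≤ K → ∀ v ∈ S,
      ∃ i : Fin T, outcome (tst (L.get (Fin.cast hL.symm i))) S = some v := by
    intro S hS v hv
    obtain ⟨S', hsub, hcard⟩ := Finset.exists_superset_card_eq hS
      (by simpa [Fintype.card_fin] using hKN)
    have hq : (⟨S', v⟩ : Pr N) ∈ Q := by
      rw [hQdef, Finset.mem_sigma]
      exact ⟨Finset.mem_powersetCard_univ.2 hcard, hsub hv⟩
    obtain ⟨σ, hσL, hσ⟩ := hcover _ hq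
    obtain ⟨j, hj⟩ := List.mem_iff_get.1 hσL
    refine ⟨Fin.cast hL j, ?_⟩
    have : L.get (Fin.cast hL.symm (Fin.cast hL j)) = σ := by
      rw [← hj]; congr 1
    rw [this]
    exact outcome_subset hsub hv hσ
  intro S₁ hS₁ S₂ hS₂ heq
  simp only [Set.mem_setOf_eq] at hS₁ hS₂
  have hincl : ∀ (A B : Finset (Fin N)), A.card ≤ K → B.card ≤ K →
      ((fun i : Fin T => outcome (tst (L.get (Fin.cast hL.symm i))) A)
        = fun i => outcome (tst (L.get (Fin.cast hL.symm i))) B) → A ⊆ B := by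
    intro A B hA _ h v hv
    obtain ⟨i, hi⟩ := hkey A hA v hv
    have : outcome (tst (L.get (Fin.cast hL.symm i))) B = some v := by
      rw [← congrFun h i]; exact hi
    exact mem_of_outcome this
  exact Finset.Subset.antisymm (hincl _ _ hS₁ hS₂ heq) (hincl _ _ hS₂ hS₁ heq.symm)


end Stmt9Aux

open Stmt9Aux in
theorem stmt9 (N K : ℕ) (hK : 2 ≤ K) (hKN : K ≤ N) :
    (∃ (T : ℕ) (𝒯 : Fin T → List (Fin N)),
        (∀ i, (𝒯 i).Nodup) ∧ Feasible N K 𝒯 ∧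
        (T : ℤ) ≤ ⌊Real.log ((K * N.choose K : ℕ) : ℝ) /
            Real.log ((K : ℝ) / ((K : ℝ) - 1))⌋ + 1) ∧
    (TNK N K : ℤ) ≤ ⌈(K : ℝ) * Real.log ((K * N.choose K : ℕ) : ℝ)⌉ := by
  classical
  set M : ℕ := K * N.choose K with hMdef
  have hchoose : 0 < N.choose K := Nat.choose_pos hKN
  have hM2 : 2 ≤ M := le_trans hK (Nat.le_mul_of_pos_right K hchoose)
  have hMR : (1 : ℝ) < (M : ℝ) := by exact_mod_cast lt_of_lt_of_le one_lt_two hM2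
  have hK2R : (2 : ℝ) ≤ (K : ℝ) := by exact_mod_cast hK
  set c : ℝ := (K : ℝ) / ((K : ℝ) - 1) with hcdef
  have hc1 : 1 < c := by
    rw [hcdef, lt_div_iff₀ (by linarith)]
    linarith
  have hlogc : 0 < Real.log c := Real.log_pos hc1
  have hlogM : 0 < Real.log M := Real.log_pos hMR
  set x : ℝ := Real.log M / Real.log c with hxdef
  have hx0 : 0 ≤ x := le_of_lt (div_pos hlogM hlogc)
  have hfl0 : 0 ≤ ⌊x⌋ := Int.floor_nonneg.2 hx0
  set T : ℕ := (⌊x⌋ + 1).toNat with hTdef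
  have hTZ : (T : ℤ) = ⌊x⌋ + 1 := Int.toNat_of_nonneg (by omega)
  have hTx : x < (T : ℝ) := by
    have h1 : x < (⌊x⌋ : ℝ) + 1 := Int.lt_floor_add_one x
    have h2 : ((T : ℤ) : ℝ) = (⌊x⌋ : ℝ) + 1 := by rw [hTZ]; push_cast; ring
    rw [Int.cast_natCast] at h2
    linarith
  have hMc : (M : ℝ) < c ^ T := by
    have h1 : Real.log M < T * Real.log c := by
      have heq : Real.log M = x * Real.log c := by
        rw [hxdef, div_mul_cancel₀ _ (ne_of_gt hlogc)]
      rw [heq]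
      exact mul_lt_mul_of_pos_right hTx hlogc
    have h2 : Real.log M < Real.log (c ^ T) := by rw [Real.log_pow]; exact h1
    have hcT : 0 < c ^ T := pow_pos (by linarith) T
    calc (M : ℝ) = Real.exp (Real.log M) := (Real.exp_log (by linarith)).symm
      _ < Real.exp (Real.log (c ^ T)) := Real.exp_lt_exp.2 h2
      _ = c ^ T := Real.exp_log hcT
  have hpow : (0 : ℝ) < ((K : ℝ) - 1) ^ T := pow_pos (by linarith) T
  have hdiv : (M : ℝ) < (K : ℝ) ^ T / ((K : ℝ) - 1) ^ T := by
    rw [← div_pow]; exact hMc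
  have hRlt : (M : ℝ) * ((K : ℝ) - 1) ^ T < (K : ℝ) ^ T := (lt_div_iff₀ hpow).1 hdiv
  have hnat : (K - 1) ^ T * M < K ^ T := by
    rw [← Nat.cast_lt (α := ℝ)]
    push_cast [Nat.cast_sub (show 1 ≤ K by omega)]
    linarith
  obtain ⟨𝒯, hnodup, hfeas⟩ := exists_design hK hKN hnat
  have hmem : T ∈ {T : ℕ | ∃ 𝒯 : Fin T → List (Fin N), (∀ i, (𝒯 i).Nodup) ∧ Feasible N K 𝒯} :=
    ⟨𝒯, hnodup, hfeas⟩
  constructor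
  · exact ⟨T, 𝒯, hnodup, hfeas, le_of_eq hTZ⟩
  · have h1 : (TNK N K : ℤ) ≤ (T : ℤ) := by exact_mod_cast Nat.sInf_le hmem
    refine le_trans h1 ?_
    rw [hTZ]
    have hne1 : ((K : ℝ) - 1) / (K : ℝ) ≠ 1 := by
      intro h
      rw [div_eq_one_iff_eq (by linarith)] at h
      linarith
    have hlog1 : Real.log (((K : ℝ) - 1) / (K : ℝ)) < ((K : ℝ) - 1) / (K : ℝ) - 1 :=
      Real.log_lt_sub_one_of_pos (div_pos (by linarith) (by linarith)) hne1
    have hlog2 : ((K : ℝ) - 1) / (K : ℝ) - 1 = -(1 / (K : ℝ)) := by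
      field_simp
      ring
    have hlog3 : Real.log c = -Real.log (((K : ℝ) - 1) / (K : ℝ)) := by
      rw [hcdef, ← Real.log_inv, inv_div]
    have hinvK : 1 / (K : ℝ) < Real.log c := by
      rw [hlog3]; linarith
    have hxK : x < (K : ℝ) * Real.log M := by
      have h2 : Real.log M / Real.log c < Real.log M / (1 / (K : ℝ)) :=
        div_lt_div_of_pos_left hlogM (by positivity) hinvK
      rw [one_div] at h2
      have h3 : Real.log (M:ℝ) / ((K:ℝ))⁻¹ = (K:ℝ) * Real.log (M:ℝ) := by
        field_simp
      rw [h3] at h2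

      rw [hxdef]
      linarith
    have hceil : ⌊x⌋ < ⌈(K : ℝ) * Real.log M⌉ := by
      rw [Int.lt_ceil]
      exact lt_of_le_of_lt (Int.floor_le x) hxK
    omega
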